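/- There exists a unique family of polynomials Ω_{+,p;+,q} ∈ 𝒜 (p, q ≥ 0) such that tr(R_+(λ)·R_+(μ)) − 1 = (λ−μ)² · Σ_{p,q≥0} Ω_{+,p;+,q} λ^{−p−1} μ^{−q−1}, an identity in the ring 𝒜[[λ^{-1}, μ^{-1}}]][λ, μ]. Moreover Ω_{+,p;+,q} = Ω_{+,q;+,p} for all p, q ≥ 0, and Ω_{+,p;+,0} = Ω_{+,0;+,q} = 0 for all p, q ≥ 0. -/

import Mathlib

noncomputable section

open PowerSeries

open scoped Classical

/-- The polynomial ring `𝒜 = ℚ[q_{n+i}, r_{n+i} : i ∈ ℤ]`; the variable `(true, i)`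
is `q_{n+i}` and `(false, i)` is `r_{n+i}`. -/
abbrev A : Type := MvPolynomial (Bool × ℤ) ℚ

/-- The generator `q_{n+i}`. -/
def qv (i : ℤ) : A := MvPolynomial.X (true, i)

/-- The generator `r_{n+i}`. -/
def rv (i : ℤ) : A := MvPolynomial.X (false, i)

/-- The shift operator `Λ`, determined by `Λ(q_{n+i}) = q_{n+i+1}`, `Λ(r_{n+i}) = r_{n+i+1}`. -/
def Lam : A →+* A :=
  (MvPolynomial.rename (fun bi : Bool × ℤ => (bi.1, bi.2 + 1))).toRingHom

/-- Formal power series over `𝒜` (in `λ`, or in `λ⁻¹`, depending on the context). -/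
abbrev S : Type := PowerSeries A

/-- 2×2 matrices over `𝒜[[λ]]` (resp. `𝒜[[λ⁻¹]]`). -/
abbrev M2 : Type := Matrix (Fin 2) (Fin 2) S

/-- `Λ` acting coefficientwise on formal power series. -/
def LamS : S →+* S := PowerSeries.map Lam

/-- The Lax matrix `U(λ) = ((λ, r_n), (λ q_n, 1))`, as a matrix over `𝒜[[λ]]`. -/
def Umat : M2 :=
  !![PowerSeries.X, PowerSeries.C (R := A) (rv 0);
     PowerSeries.X * PowerSeries.C (R := A) (qv 0), 1]

/-- The Lax matrix multiplied by `λ⁻¹`, i.e. `λ⁻¹·U(λ) = ((1, λ⁻¹ r_n), (q_n, λ⁻¹))`,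
as a matrix over `𝒜[[λ⁻¹]]` (here `PowerSeries.X` stands for `λ⁻¹`). -/
def UmatInf : M2 :=
  !![1, PowerSeries.X * PowerSeries.C (R := A) (rv 0);
     PowerSeries.C (R := A) (qv 0), PowerSeries.X]

/-- `R` is the basic matrix resolvent at `λ = 0`: it is a matrix resolvent
(`Λ(R(λ))·U(λ) = U(λ)·R(λ)`), `R ≡ ((0, r_{n-1}), (0, 1)) mod λ`, `tr R = 1`, `det R = 0`. -/
def IsResMinus (R : M2) : Prop :=
  R.map (⇑LamS) * Umat = Umat * R ∧
  R.map (⇑(PowerSeries.constantCoeff (R := A))) = !![0, rv (-1); 0, 1] ∧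
  R 0 0 + R 1 1 = 1 ∧
  R 0 0 * R 1 1 - R 0 1 * R 1 0 = 0

/-- `R` is the basic matrix resolvent at `λ = ∞`: it is a matrix resolvent
(the equation `Λ(R(λ))·U(λ) = U(λ)·R(λ)` is multiplied by `λ⁻¹`, so that it takes place
in matrices over `𝒜[[λ⁻¹]]`), `R ≡ ((1, 0), (q_{n-1}, 0)) mod λ⁻¹`, `tr R = 1`, `det R = 0`. -/
def IsResPlus (R : M2) : Prop :=
  R.map (⇑LamS) * UmatInf = UmatInf * R ∧
  R.map (⇑(PowerSeries.constantCoeff (R := A))) = !![1, 0; qv (-1), 0] ∧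
  R 0 0 + R 1 1 = 1 ∧
  R 0 0 * R 1 1 - R 0 1 * R 1 0 = 0

/-- The `p`-th coefficient matrix of a matrix of power series. -/
def coefM (R : M2) (p : ℕ) : Matrix (Fin 2) (Fin 2) A :=
  Matrix.of fun i j => PowerSeries.coeff (R := A) p (R i j)

/-- The coefficients `a_{α,p}` (with `α = + ↔ true`, `α = - ↔ false`). -/
def aC (Rm Rp : M2) (α : Bool) (p : ℕ) : A :=
  if α then coefM Rp p 0 0 - (if p = 0 then 1 else 0) else coefM Rm p 0 0

/-- The coefficients `b_{α,p}`. -/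
def bC (Rm Rp : M2) (α : Bool) (p : ℕ) : A :=
  if α then coefM Rp p 0 1 else coefM Rm p 0 1

/-- The coefficients `c_{α,p}`. -/
def cC (Rm Rp : M2) (α : Bool) (p : ℕ) : A :=
  if α then coefM Rp p 1 0 else coefM Rm p 1 0

/-- `U(λ) = U0 + λ·U1`: constant part. -/
def U0 : Matrix (Fin 2) (Fin 2) A := !![0, rv 0; 0, 1]

/-- `U(λ) = U0 + λ·U1`: linear part. -/
def U1 : Matrix (Fin 2) (Fin 2) A := !![1, 0; qv 0, 0]

/-- The coefficient at `λ^m` (`m ∈ ℤ`) of the Laurent-polynomial matrix `V_{α,p}(λ)`,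
where `V_{-,p}(λ) = (λ^{-p}R_-(λ))_{≤0} - ((a_{-,p}, b_{-,p}), (0,0))` and
`V_{+,p}(λ) = (λ^{p}R_+(λ))_{≥0} - ((0,0), (c_{+,p}, -a_{+,p}))`. -/
def Vc (Rm Rp : M2) (α : Bool) (p : ℕ) (m : ℤ) : Matrix (Fin 2) (Fin 2) A :=
  if α then
    (if 0 ≤ m ∧ m ≤ (p : ℤ) then coefM Rp ((p : ℤ) - m).toNat else 0)
      - (if m = 0 then !![0, 0; cC Rm Rp true p, - aC Rm Rp true p] else 0)
  else
    (if -(p : ℤ) ≤ m ∧ m ≤ 0 then coefM Rm (m + (p : ℤ)).toNat else 0)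
      - (if m = 0 then !![aC Rm Rp false p, bC Rm Rp false p; 0, 0] else 0)

/-- The coefficient at `λ^m` (`m ∈ ℤ`) of `D(U(λ))`, where `D(λ) = 0`, i.e. of
`((0, D r_n), (λ·D q_n, 0))`. -/
def DUcoef (D : Derivation ℚ A A) (m : ℤ) : Matrix (Fin 2) (Fin 2) A :=
  if m = 0 then !![0, D (rv 0); 0, 0]
  else if m = 1 then !![0, 0; D (qv 0), 0] else 0

/-- The equation `D(U(λ)) = Λ(V_{α,p}(λ))·U(λ) - U(λ)·V_{α,p}(λ)`, written coefficientwise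
in powers of `λ` (both sides are Laurent polynomials in `λ` with matrix coefficients). -/
def DUeq (Rm Rp : M2) (α : Bool) (p : ℕ) (D : Derivation ℚ A A) : Prop :=
  ∀ m : ℤ,
    DUcoef D m =
      (Vc Rm Rp α p m).map Lam * U0 + (Vc Rm Rp α p (m - 1)).map Lam * U1
        - U0 * Vc Rm Rp α p m - U1 * Vc Rm Rp α p (m - 1)

/-- `D` commutes with the shift `Λ`. -/
def CommutesLam (D : Derivation ℚ A A) : Prop := ∀ f : A, D (Lam f) = Lam (D f)

/-- The action of `D_{α,p}` on the generators `r_n`, `q_n`. -/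
def GenEqs (Rm Rp : M2) (α : Bool) (p : ℕ) (D : Derivation ℚ A A) : Prop :=
  if α then
    D (rv 0) = rv 0 * Lam (aC Rm Rp true p) + Lam (bC Rm Rp true p)
        + (if p = 0 then rv 0 else 0) ∧
    D (qv 0) = qv 0 * Lam (aC Rm Rp true p) - Lam (cC Rm Rp true p)
  else
    D (rv 0) = -(rv 0 * Lam (aC Rm Rp false p)) - Lam (bC Rm Rp false p) ∧
    D (qv 0) = -(qv 0 * Lam (aC Rm Rp false p)) + Lam (cC Rm Rp false p)
        + (if p = 0 then qv 0 else 0)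

/-- `D` is the Ablowitz–Ladik derivation `D_{α,p}`: the unique derivation of `𝒜`
commuting with `Λ` and acting on the generators by the prescribed formulas. -/
def IsALDeriv (Rm Rp : M2) (α : Bool) (p : ℕ) (D : Derivation ℚ A A) : Prop :=
  CommutesLam D ∧ GenEqs Rm Rp α p D

/-- The coefficient at `λ^m` (`m ∈ ℤ`) of `R_α(λ)`: `R_-(λ)` has only nonnegative powers,
`R_+(λ)` only nonpositive ones. -/
def RExt (Rm Rp : M2) (α : Bool) (m : ℤ) : Matrix (Fin 2) (Fin 2) A :=
  if α then (if m ≤ 0 then coefM Rp (-m).toNat else 0)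
  else (if 0 ≤ m then coefM Rm m.toNat else 0)

/-- Extension of a double sequence by zero to integer indices. -/
def OmExt (Om : ℕ → ℕ → A) (m k : ℤ) : A :=
  if 0 ≤ m ∧ 0 ≤ k then Om m.toNat k.toNat else 0

/-- The generating identity `tr(R_+(λ)R_+(μ)) - 1 = (λ-μ)² Σ_{p,q≥0} Ω_{p,q} λ^{-p-1} μ^{-q-1}`,
written coefficientwise: `m, k` are the exponents of `λ⁻¹, μ⁻¹`. -/
def GenPP (Rp : M2) (Om : ℕ → ℕ → A) : Prop :=
  ∀ m k : ℤ,
    (if 0 ≤ m ∧ 0 ≤ k then (coefM Rp m.toNat * coefM Rp k.toNat).trace else 0)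
      - (if m = 0 ∧ k = 0 then 1 else 0)
    = OmExt Om (m + 1) (k - 1) - 2 * OmExt Om m k + OmExt Om (m - 1) (k + 1)

/-- The generating identity `tr(R_-(λ)R_-(μ)) - 1 = (λ-μ)² Σ_{p,q≥0} Ω_{p,q} λ^{p-1} μ^{q-1}`,
written coefficientwise: `m, k` are the exponents of `λ, μ`. -/
def GenMM (Rm : M2) (Om : ℕ → ℕ → A) : Prop :=
  ∀ m k : ℤ,
    (if 0 ≤ m ∧ 0 ≤ k then (coefM Rm m.toNat * coefM Rm k.toNat).trace else 0)
      - (if m = 0 ∧ k = 0 then 1 else 0)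
    = OmExt Om (m - 1) (k + 1) - 2 * OmExt Om m k + OmExt Om (m + 1) (k - 1)

/-- The generating identity
`Σ_{p,q≥0} Ω_{p,q} λ^{-p-1} μ^{q-1} = -tr(R_+(λ)R_-(μ))·Σ_{m≥1} m μ^{m-1} λ^{-m-1} + λ^{-2}`
(the expansion of `-tr(R_+(λ)R_-(μ))/(λ-μ)² + 1/λ²` for `|λ| > |μ|`), together with the
vanishing `Ω_{0,q} = Ω_{p,0} = 0`; `a` is the exponent of `λ⁻¹` and `b` the one of `μ`. -/
def GenPM (Rm Rp : M2) (Om : ℕ → ℕ → A) : Prop :=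
  (∀ q, Om 0 q = 0) ∧ (∀ p, Om p 0 = 0) ∧
  ∀ a b : ℤ,
    OmExt Om (a - 1) (b + 1)
      = -(∑ m ∈ Finset.Icc (1 : ℤ) (min (a - 1) (b + 1)),
            m • (coefM Rp (a - m - 1).toNat * coefM Rm (b - m + 1).toNat).trace)
        + (if a = 2 ∧ b = 0 then 1 else 0)

/-- The generating identity
`Σ_{p,q≥0} Ω_{q,p} λ^{p-1} μ^{-q-1} = -tr(R_-(λ)R_+(μ))·Σ_{m≥1} m λ^{m-1} μ^{-m-1} + μ^{-2}`
(the expansion of `-tr(R_-(λ)R_+(μ))/(λ-μ)² + 1/μ²` for `|μ| > |λ|`);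
`c` is the exponent of `λ` and `d` the one of `μ⁻¹`. -/
def GenMP (Rm Rp : M2) (Om : ℕ → ℕ → A) : Prop :=
  ∀ c d : ℤ,
    OmExt Om (d - 1) (c + 1)
      = -(∑ m ∈ Finset.Icc (1 : ℤ) (min (c + 1) (d - 1)),
            m • (coefM Rm (c - m + 1).toNat * coefM Rp (d - m - 1).toNat).trace)
        + (if c = 0 ∧ d = 2 then 1 else 0)

/-- `Om α β p q` is the full tau-structure family `Ω_{α,p;β,q}`
(with `α = + ↔ true`), as defined by the four generating identities,
where `Ω_{-,p;+,q} := Ω_{+,q;-,p}`. -/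
def OmFam (Rm Rp : M2) (Om : Bool → Bool → ℕ → ℕ → A) : Prop :=
  GenPP Rp (Om true true) ∧ GenMM Rm (Om false false) ∧ GenPM Rm Rp (Om true false) ∧
  ∀ p q, Om false true p q = Om true false q p

/-- The multipoint quantities `Ω_{α_1,p_1;…;α_m,p_m}` (`m = k + 2` points), defined
inductively from the two-point family by applying the derivations `D_{α,p}`. -/
def OmK (Om : Bool → Bool → ℕ → ℕ → A) (D : Bool → ℕ → Derivation ℚ A A) :
    (k : ℕ) → (Fin (k + 2) → Bool) → (Fin (k + 2) → ℕ) → A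
  | 0, β, i => Om (β 0) (β 1) (i 0) (i 1)
  | k + 1, β, i =>
      D (β (Fin.last (k + 2))) (i (Fin.last (k + 2)))
        (OmK Om D k (fun j => β j.castSucc) (fun j => i j.castSucc))

/-- Multiplication of a formal series in `λ_1, …, λ_n` with exponents in `ℤⁿ`
(given by its coefficient function `F`) by a polynomial `P`, coefficientwise. -/
def mulPoly {n : ℕ} (P : MvPolynomial (Fin n) A) (F : (Fin n → ℤ) → A)
    (m : Fin n → ℤ) : A :=
  ∑ d ∈ P.support, P.coeff d * F (fun j => m j - d j)

/-- The Vandermonde-type polynomial `∏_{i<j} (λ_i - λ_j)`. -/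
def vandP (n : ℕ) : MvPolynomial (Fin n) A :=
  ∏ p ∈ Finset.univ.filter (fun p : Fin n × Fin n => p.1 < p.2),
    (MvPolynomial.X p.1 - MvPolynomial.X p.2)

/-- `i` and `j` are cyclically adjacent for `σ`, i.e. `{i,j} = {σ(t), σ(t+1)}` for some `t`. -/
def cycAdj {n : ℕ} [NeZero n] (σ : Equiv.Perm (Fin n)) (i j : Fin n) : Prop :=
  ∃ t : Fin n, (σ t = i ∧ σ (t + 1) = j) ∨ (σ t = j ∧ σ (t + 1) = i)

/-- The polynomial `∏_{i<j} (λ_i - λ_j) / ∏_t (λ_{σ(t)} - λ_{σ(t+1)})`, up to the sign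
`permSign σ`: the product of `(λ_i - λ_j)` over ordered non-cyclically-adjacent pairs. -/
def Qpoly {n : ℕ} [NeZero n] (σ : Equiv.Perm (Fin n)) : MvPolynomial (Fin n) A :=
  ∏ p ∈ Finset.univ.filter
      (fun p : Fin n × Fin n => p.1 < p.2 ∧ ¬ cycAdj σ p.1 p.2),
    (MvPolynomial.X p.1 - MvPolynomial.X p.2)

/-- The sign relating `∏_t (λ_{σ(t)} - λ_{σ(t+1)})` with the corresponding product over
ordered pairs. -/
def permSign {n : ℕ} [NeZero n] (σ : Equiv.Perm (Fin n)) : A :=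
  ∏ t : Fin n, (if σ (t + 1) < σ t then (-1 : A) else 1)

/-- The coefficient function of `tr(R_{α_{σ(1)}}(λ_{σ(1)}) ⋯ R_{α_{σ(n)}}(λ_{σ(n)}))`. -/
def Gfun (Rm Rp : M2) {n : ℕ} (β : Fin n → Bool) (σ : Equiv.Perm (Fin n))
    (m : Fin n → ℤ) : A :=
  (List.ofFn (fun j : Fin n => RExt Rm Rp (β (σ j)) (m (σ j)))).prod.trace

/-- The coefficient function of the generating series
`Σ_{i_1,…,i_m ≥ 0} Ω_{α_1,i_1;…;α_m,i_m} / (λ_1^{α_1 i_1 + 1} ⋯ λ_m^{α_m i_m + 1})`. -/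
def lhsF (Om : Bool → Bool → ℕ → ℕ → A) (D : Bool → ℕ → Derivation ℚ A A)
    {k : ℕ} (β : Fin (k + 2) → Bool) (m : Fin (k + 2) → ℤ) : A :=
  if (∀ j, if β j then m j ≤ -1 else -1 ≤ m j) then
    OmK Om D k β (fun j => if β j then (-(m j) - 1).toNat else (m j + 1).toNat)
  else 0

/-- The coefficient `g(m,k)` appearing on the LHS of `GenPP`. -/
def gD (Rp : M2) (m k : ℤ) : A :=
  (if 0 ≤ m ∧ 0 ≤ k then (coefM Rp m.toNat * coefM Rp k.toNat).trace else 0)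
    - (if m = 0 ∧ k = 0 then 1 else 0)

/-- The canonical solution `Ω` extended to integer arguments. -/
def fOm (Rp : M2) (m k : ℤ) : A :=
  ∑ j ∈ Finset.Ico (0 : ℤ) m, (m - j) • gD Rp j (m + k - j)

/-- Partial sums of `g` along an antidiagonal. -/
def sG (Rp : M2) (s w : ℤ) : A := ∑ j ∈ Finset.Ico (0 : ℤ) w, gD Rp j (s - j)

lemma gD_neg {Rp : M2} {m k : ℤ} (h : m < 0 ∨ k < 0) : gD Rp m k = 0 := by
  unfold gD
  rw [if_neg, if_neg]
  · ring
  · rintro ⟨h1, h2⟩; omega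
  · rintro ⟨h1, h2⟩; omega

def natIntEmb : ℕ ↪ ℤ := ⟨fun n => (n : ℤ), Nat.cast_injective⟩

lemma Ico_int_eq_map (n : ℕ) :
    Finset.Ico (0 : ℤ) (n : ℤ) = (Finset.range n).map natIntEmb := by
  ext x
  simp only [Finset.mem_Ico, Finset.mem_map, Finset.mem_range, natIntEmb,
    Function.Embedding.coeFn_mk]
  constructor
  · rintro ⟨h0, hn⟩; exact ⟨x.toNat, by omega, by omega⟩
  · rintro ⟨a, ha, rfl⟩; omega

lemma sum_Ico_int (n : ℕ) (h : ℤ → A) :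
    ∑ j ∈ Finset.Ico (0 : ℤ) (n : ℤ), h j = ∑ j ∈ Finset.range n, h (j : ℤ) := by
  rw [Ico_int_eq_map, Finset.sum_map]; rfl

lemma trace_coef (Rp : M2) (p q : ℕ) :
    (coefM Rp p * coefM Rp q).trace =
      PowerSeries.coeff (R := A) p (Rp 0 0) * PowerSeries.coeff (R := A) q (Rp 0 0)
      + PowerSeries.coeff (R := A) p (Rp 0 1) * PowerSeries.coeff (R := A) q (Rp 1 0)
      + (PowerSeries.coeff (R := A) p (Rp 1 0) * PowerSeries.coeff (R := A) q (Rp 0 1)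
      + PowerSeries.coeff (R := A) p (Rp 1 1) * PowerSeries.coeff (R := A) q (Rp 1 1)) := by
  simp [Matrix.trace_fin_two, Matrix.mul_apply, Fin.sum_univ_two, coefM]

lemma trace_sq_one (Rp : M2) (hp : IsResPlus Rp) :
    Rp 0 0 * Rp 0 0 + Rp 0 1 * Rp 1 0 + (Rp 1 0 * Rp 0 1 + Rp 1 1 * Rp 1 1) = 1 := by
  have h1 := hp.2.2.1
  have h2 := hp.2.2.2
  have key : Rp 0 0 * Rp 0 0 + Rp 0 1 * Rp 1 0 + (Rp 1 0 * Rp 0 1 + Rp 1 1 * Rp 1 1)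
      = (Rp 0 0 + Rp 1 1) * (Rp 0 0 + Rp 1 1)
        - 2 * (Rp 0 0 * Rp 1 1 - Rp 0 1 * Rp 1 0) := by ring
  rw [key, h1, h2]; ring

lemma key_sum (Rp : M2) (hp : IsResPlus Rp) (s : ℕ) :
    ∑ j ∈ Finset.range (s + 1), (coefM Rp j * coefM Rp (s - j)).trace
      = if s = 0 then 1 else 0 := by
  have h := congrArg (PowerSeries.coeff (R := A) s) (trace_sq_one Rp hp)
  rw [PowerSeries.coeff_one] at h
  rw [← h, ← Finset.Nat.sum_antidiagonal_eq_sum_range_succ_mk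
      (fun ij => (coefM Rp ij.1 * coefM Rp ij.2).trace) s]
  simp only [map_add, PowerSeries.coeff_mul, trace_coef, ← Finset.sum_add_distrib]

lemma key_sum_j (Rp : M2) (hp : IsResPlus Rp) (n : ℕ) :
    ∑ j ∈ Finset.range (n + 1), (j : ℤ) • (coefM Rp j * coefM Rp (n - j)).trace = 0 := by
  set T : ℕ → A := fun j => (coefM Rp j * coefM Rp (n - j)).trace with hT
  have hsymm : ∀ j ∈ Finset.range (n + 1), T (n - j) = T j := by
    intro j hj
    simp only [Finset.mem_range] at hj
    simp only [T]
    rw [Matrix.trace_mul_comm]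
    have h2 : n - (n - j) = j := by omega
    rw [h2]
  have hrefl : ∑ j ∈ Finset.range (n + 1), ((n : ℤ) - j) • T j
      = ∑ j ∈ Finset.range (n + 1), (j : ℤ) • T j := by
    rw [← Finset.sum_range_reflect (fun j => (j : ℤ) • T j) (n + 1)]
    refine Finset.sum_congr rfl ?_
    intro j hj
    simp only [Finset.mem_range] at hj
    have h1 : n + 1 - 1 - j = n - j := by omega
    rw [h1, hsymm j (by simp only [Finset.mem_range]; omega)]
    have h2 : ((n - j : ℕ) : ℤ) = (n : ℤ) - j := by omega
    rw [h2]
  have hsplit : ∑ j ∈ Finset.range (n + 1), ((n : ℤ) - j) • T j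
      = (n : ℤ) • (∑ j ∈ Finset.range (n + 1), T j)
        - ∑ j ∈ Finset.range (n + 1), (j : ℤ) • T j := by
    rw [Finset.smul_sum, ← Finset.sum_sub_distrib]
    refine Finset.sum_congr rfl ?_
    intro j _
    rw [sub_smul]
  have hTsum : ∑ j ∈ Finset.range (n + 1), T j = if n = 0 then 1 else 0 :=
    key_sum Rp hp n
  set S : A := ∑ j ∈ Finset.range (n + 1), (j : ℤ) • T j with hS
  have h2 : S + S = (n : ℤ) • (if n = 0 then (1 : A) else 0) := by
    rw [← hTsum]
    exact eq_sub_iff_add_eq.mp (hrefl.symm.trans hsplit)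
  rcases Nat.eq_zero_or_pos n with hn | hn
  · subst hn
    simp [hS, T]
  · rw [if_neg (by omega), smul_zero] at h2
    have h3 : (2 : A) * S = 0 := by linear_combination h2
    rcases mul_eq_zero.mp h3 with h4 | h4
    · exact absurd h4 two_ne_zero
    · exact h4


lemma sum_deltaIf (n : ℕ) :
    ∑ j ∈ Finset.range (n + 1), (if j = 0 ∧ n = 0 then (1 : A) else 0)
      = if n = 0 then 1 else 0 := by
  rcases Nat.eq_zero_or_pos n with hn | hn
  · subst hn; simp
  · rw [if_neg (by omega)]
    apply Finset.sum_eq_zero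
    intro j _
    rw [if_neg (by omega)]

lemma sum_gD (Rp : M2) (hp : IsResPlus Rp) (s w : ℤ) (hw : s < w) :
    sG Rp s w = 0 := by
  unfold sG
  rcases lt_or_ge s 0 with hs | hs
  · apply Finset.sum_eq_zero
    intro j hj
    simp only [Finset.mem_Ico] at hj
    exact gD_neg (Or.inr (by omega))
  · have hsub : Finset.Ico (0 : ℤ) (s + 1) ⊆ Finset.Ico (0 : ℤ) w :=
      Finset.Ico_subset_Ico le_rfl (by omega)
    rw [← Finset.sum_subset hsub (fun x hx hx2 => by
      simp only [Finset.mem_Ico] at hx hx2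
      exact gD_neg (Or.inr (by omega)))]
    lift s to ℕ using hs with n
    have hcast : (n : ℤ) + 1 = ((n + 1 : ℕ) : ℤ) := by push_cast; ring
    rw [hcast, sum_Ico_int]
    have hterm : ∀ j ∈ Finset.range (n + 1), gD Rp (j : ℤ) ((n : ℤ) - j)
        = (coefM Rp j * coefM Rp (n - j)).trace - (if j = 0 ∧ n = 0 then (1 : A) else 0) := by
      intro j hj
      simp only [Finset.mem_range] at hj
      unfold gD
      have e1 : ((j : ℤ)).toNat = j := by omega
      have e2 : ((n : ℤ) - j).toNat = n - j := by omega
      rw [if_pos ⟨by omega, by omega⟩, e1, e2]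
      congr 1
      by_cases hc : j = 0 ∧ n = 0
      · rw [if_pos (show (j : ℤ) = 0 ∧ (n : ℤ) - j = 0 by omega), if_pos hc]
      · rw [if_neg (show ¬((j : ℤ) = 0 ∧ (n : ℤ) - j = 0) by omega), if_neg hc]
    rw [Finset.sum_congr rfl hterm, Finset.sum_sub_distrib, key_sum Rp hp n, sum_deltaIf n]
    ring

lemma sum_jgD (Rp : M2) (hp : IsResPlus Rp) (s w : ℤ) (hw : s < w) :
    ∑ j ∈ Finset.Ico (0 : ℤ) w, j • gD Rp j (s - j) = 0 := by
  rcases lt_or_ge s 0 with hs | hs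
  · apply Finset.sum_eq_zero
    intro j hj
    simp only [Finset.mem_Ico] at hj
    rw [gD_neg (Or.inr (by omega)), smul_zero]
  · have hsub : Finset.Ico (0 : ℤ) (s + 1) ⊆ Finset.Ico (0 : ℤ) w :=
      Finset.Ico_subset_Ico le_rfl (by omega)
    rw [← Finset.sum_subset hsub (fun x hx hx2 => by
      simp only [Finset.mem_Ico] at hx hx2
      rw [gD_neg (Or.inr (by omega)), smul_zero])]
    lift s to ℕ using hs with n
    have hcast : (n : ℤ) + 1 = ((n + 1 : ℕ) : ℤ) := by push_cast; ring
    rw [hcast, sum_Ico_int]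
    have hterm : ∀ j ∈ Finset.range (n + 1), (j : ℤ) • gD Rp (j : ℤ) ((n : ℤ) - j)
        = (j : ℤ) • (coefM Rp j * coefM Rp (n - j)).trace := by
      intro j hj
      simp only [Finset.mem_range] at hj
      rcases Nat.eq_zero_or_pos j with hj0 | hj0
      · subst hj0; simp
      · unfold gD
        have e1 : ((j : ℤ)).toNat = j := by omega
        have e2 : ((n : ℤ) - j).toNat = n - j := by omega
        rw [if_pos ⟨by omega, by omega⟩, e1, e2, if_neg (by omega), sub_zero]
    rw [Finset.sum_congr rfl hterm]
    exact key_sum_j Rp hp n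

lemma fOm_zero_left {Rp : M2} {m k : ℤ} (h : m ≤ 0) : fOm Rp m k = 0 := by
  unfold fOm
  rw [Finset.Ico_eq_empty (by omega), Finset.sum_empty]

lemma sG_zero {Rp : M2} {s w : ℤ} (h : w ≤ 0) : sG Rp s w = 0 := by
  unfold sG
  rw [Finset.Ico_eq_empty (by omega), Finset.sum_empty]

lemma fOm_step (Rp : M2) (m k : ℤ) :
    fOm Rp m k = fOm Rp (m - 1) (k + 1) + sG Rp (m + k) m := by
  rcases le_or_gt m 0 with hm | hm
  · rw [fOm_zero_left hm, fOm_zero_left (by omega : m - 1 ≤ 0), sG_zero hm]; ring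
  · unfold fOm sG
    have hstep : ∀ j ∈ Finset.Ico (0 : ℤ) m, (m - j) • gD Rp j (m + k - j)
        = ((m - 1) - j) • gD Rp j (m + k - j) + gD Rp j (m + k - j) := by
      intro j _
      have e : m - j = ((m - 1) - j) + 1 := by ring
      rw [e, add_smul, one_smul]
    rw [Finset.sum_congr rfl hstep, Finset.sum_add_distrib]
    congr 1
    have hins : Finset.Ico (0 : ℤ) m = insert (m - 1) (Finset.Ico (0 : ℤ) (m - 1)) := by
      ext x; simp only [Finset.mem_insert, Finset.mem_Ico]; omega
    rw [hins, Finset.sum_insert (by simp [Finset.mem_Ico]), sub_self, zero_smul, zero_add]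
    apply Finset.sum_congr rfl
    intro j _
    have e : (m - 1) + (k + 1) - j = m + k - j := by ring
    rw [e]

lemma fOm_zero_right (Rp : M2) (hp : IsResPlus Rp) {m k : ℤ} (hk : k ≤ 0) :
    fOm Rp m k = 0 := by
  rcases le_or_gt m 0 with hm | hm
  · exact fOm_zero_left hm
  · unfold fOm
    have hsub : Finset.Ico (0 : ℤ) m ⊆ Finset.Ico (0 : ℤ) (m + 1) :=
      Finset.Ico_subset_Ico le_rfl (by omega)
    rw [Finset.sum_subset hsub (fun x hx hx2 => by
      simp only [Finset.mem_Ico] at hx hx2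
      have hxm : x = m := by omega
      rw [hxm, sub_self, zero_smul])]
    have hsplit : ∑ j ∈ Finset.Ico (0 : ℤ) (m + 1), (m - j) • gD Rp j (m + k - j)
        = m • (∑ j ∈ Finset.Ico (0 : ℤ) (m + 1), gD Rp j (m + k - j))
          - ∑ j ∈ Finset.Ico (0 : ℤ) (m + 1), j • gD Rp j (m + k - j) := by
      rw [Finset.smul_sum, ← Finset.sum_sub_distrib]
      exact Finset.sum_congr rfl fun j _ => sub_smul m j _
    rw [hsplit]
    have h1 : ∑ j ∈ Finset.Ico (0 : ℤ) (m + 1), gD Rp j (m + k - j) = 0 :=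
      sum_gD Rp hp (m + k) (m + 1) (by omega)
    rw [h1, smul_zero, sum_jgD Rp hp (m + k) (m + 1) (by omega)]
    ring

lemma OmExt_fOm (Rp : M2) (hp : IsResPlus Rp) (m k : ℤ) :
    OmExt (fun p q => fOm Rp p q) m k = fOm Rp m k := by
  unfold OmExt
  split_ifs with h
  · simp only
    rw [Int.toNat_of_nonneg h.1, Int.toNat_of_nonneg h.2]
  · symm
    rcases not_and_or.mp h with h' | h'
    · exact fOm_zero_left (by omega)
    · exact fOm_zero_right Rp hp (by omega)

lemma fOm_diff (Rp : M2) (hp : IsResPlus Rp) (m k : ℤ) :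
    fOm Rp (m + 1) (k - 1) - 2 * fOm Rp m k + fOm Rp (m - 1) (k + 1) = gD Rp m k := by
  have h1 := fOm_step Rp (m + 1) (k - 1)
  have h2 := fOm_step Rp m k
  have e1 : (m + 1) - 1 = m := by ring
  have e2 : (k - 1) + 1 = k := by ring
  have e3 : (m + 1) + (k - 1) = m + k := by ring
  rw [e1, e2, e3] at h1
  have hdiff : sG Rp (m + k) (m + 1) - sG Rp (m + k) m = gD Rp m k := by
    rcases le_or_gt 0 m with hm | hm
    · unfold sG
      have hins : Finset.Ico (0 : ℤ) (m + 1) = insert m (Finset.Ico (0 : ℤ) m) := by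
        ext x; simp only [Finset.mem_insert, Finset.mem_Ico]; omega
      rw [hins, Finset.sum_insert (by simp [Finset.mem_Ico])]
      have e : m + k - m = k := by ring
      rw [e]; ring
    · rw [sG_zero (by omega : m + 1 ≤ 0), sG_zero (by omega : m ≤ 0),
        gD_neg (Or.inl hm)]
      ring
  rw [h1, h2]
  linear_combination hdiff

lemma genPP_fOm (Rp : M2) (hp : IsResPlus Rp) :
    GenPP Rp (fun p q => fOm Rp p q) := by
  intro m k
  have hL : (if 0 ≤ m ∧ 0 ≤ k then (coefM Rp m.toNat * coefM Rp k.toNat).trace else 0)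
      - (if m = 0 ∧ k = 0 then (1 : A) else 0) = gD Rp m k := rfl
  rw [hL, OmExt_fOm Rp hp, OmExt_fOm Rp hp, OmExt_fOm Rp hp]
  exact (fOm_diff Rp hp m k).symm

lemma genPP_unique (Rp : M2) (hp : IsResPlus Rp) (Om : ℕ → ℕ → A) (h : GenPP Rp Om)
    (p q : ℕ) : Om p q = fOm Rp p q := by
  set E : ℤ → ℤ → A := fun m k => OmExt Om m k - fOm Rp m k with hE
  have hE0 : ∀ m k : ℤ, m < 0 ∨ k < 0 → E m k = 0 := by
    intro m k hmk
    have hne : ¬(0 ≤ m ∧ 0 ≤ k) := by rcases hmk with h' | h' <;> omega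
    simp only [E, OmExt, if_neg hne]
    rcases hmk with h' | h'
    · rw [fOm_zero_left (by omega : m ≤ 0)]; ring
    · rw [fOm_zero_right Rp hp (by omega : k ≤ 0)]; ring
  have hrec : ∀ m k : ℤ, E (m + 1) (k - 1) - 2 * E m k + E (m - 1) (k + 1) = 0 := by
    intro m k
    have h1 := h m k
    have hL : (if 0 ≤ m ∧ 0 ≤ k then (coefM Rp m.toNat * coefM Rp k.toNat).trace else 0)
        - (if m = 0 ∧ k = 0 then (1 : A) else 0) = gD Rp m k := rfl
    rw [hL] at h1
    have h2 := fOm_diff Rp hp m k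
    simp only [E]
    linear_combination -h1 - h2
  set s : ℤ := (p : ℤ) + q with hs
  set φ : ℤ → A := fun m => E m (s - m) with hφ
  have hφ0 : ∀ m : ℤ, m < 0 → φ m = 0 := fun m hm => hE0 m _ (Or.inl hm)
  have hφrec : ∀ m : ℤ, φ (m + 1) - 2 * φ m + φ (m - 1) = 0 := by
    intro m
    have hr := hrec m (s - m)
    have e1 : s - m - 1 = s - (m + 1) := by ring
    have e2 : s - m + 1 = s - (m - 1) := by ring
    rw [e1, e2] at hr
    exact hr
  set ψ : ℤ → A := fun m => φ m - φ (m - 1) with hψ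
  have hψstep : ∀ m : ℤ, ψ m = ψ (m - 1) := by
    intro m
    have hr := hφrec (m - 1)
    have e : m - 1 + 1 = m := by ring
    rw [e] at hr
    simp only [ψ]
    linear_combination hr
  have hψdown : ∀ (n : ℕ) (m : ℤ), ψ m = ψ (m - n) := by
    intro n
    induction n with
    | zero => intro m; norm_num
    | succ n ih =>
        intro m
        calc ψ m = ψ (m - n) := ih m
          _ = ψ (m - n - 1) := hψstep (m - n)
          _ = ψ (m - ((n : ℕ) + 1 : ℕ)) := by
              congr 1; push_cast; ring
  have hψ0 : ∀ m : ℤ, ψ m = 0 := by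
    intro m
    rcases lt_or_ge m 0 with hm | hm
    · simp only [ψ]
      rw [hφ0 m (by omega), hφ0 (m - 1) (by omega)]; ring
    · have hd := hψdown (m + 1).toNat m
      have e : m - ((m + 1).toNat : ℤ) = -1 := by omega
      rw [e] at hd
      rw [hd]
      simp only [ψ]
      rw [hφ0 (-1) (by omega), hφ0 ((-1 : ℤ) - 1) (by omega)]; ring
  have hφconst : ∀ m : ℤ, φ m = φ (m - 1) := by
    intro m
    have := hψ0 m
    simp only [ψ] at this
    exact sub_eq_zero.mp this
  have hφdown : ∀ (n : ℕ) (m : ℤ), φ m = φ (m - n) := by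
    intro n
    induction n with
    | zero => intro m; norm_num
    | succ n ih =>
        intro m
        calc φ m = φ (m - n) := ih m
          _ = φ (m - n - 1) := hφconst (m - n)
          _ = φ (m - ((n : ℕ) + 1 : ℕ)) := by
              congr 1; push_cast; ring
  have hφp : φ (p : ℤ) = 0 := by
    have hd := hφdown ((p : ℤ) + 1).toNat p
    have e : (p : ℤ) - (((p : ℤ) + 1).toNat : ℤ) = -1 := by omega
    rw [e] at hd
    rw [hd, hφ0 (-1) (by omega)]
  have hEpq : E (p : ℤ) (q : ℤ) = 0 := by
    have e : s - (p : ℤ) = (q : ℤ) := by simp [hs]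
    rw [← e]
    exact hφp
  have hOE : OmExt Om (p : ℤ) (q : ℤ) = Om p q := by
    simp [OmExt]
  simp only [E, hOE] at hEpq
  exact sub_eq_zero.mp hEpq

lemma gD_symm (Rp : M2) (a b : ℤ) : gD Rp a b = gD Rp b a := by
  unfold gD
  congr 1
  · by_cases hc : 0 ≤ a ∧ 0 ≤ b
    · rw [if_pos hc, if_pos ⟨hc.2, hc.1⟩, Matrix.trace_mul_comm]
    · rw [if_neg hc, if_neg (fun hc2 => hc ⟨hc2.2, hc2.1⟩)]
  · by_cases hc : a = 0 ∧ b = 0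
    · rw [if_pos hc, if_pos ⟨hc.2, hc.1⟩]
    · rw [if_neg hc, if_neg (fun hc2 => hc ⟨hc2.2, hc2.1⟩)]

lemma genPP_swap (Rp : M2) (Om : ℕ → ℕ → A) (h : GenPP Rp Om) :
    GenPP Rp (fun a b => Om b a) := by
  intro m k
  have h2 := h k m
  have hL : (if 0 ≤ k ∧ 0 ≤ m then (coefM Rp k.toNat * coefM Rp m.toNat).trace else 0)
      - (if k = 0 ∧ m = 0 then (1 : A) else 0) = gD Rp k m := rfl
  rw [hL] at h2
  have hL2 : (if 0 ≤ m ∧ 0 ≤ k then (coefM Rp m.toNat * coefM Rp k.toNat).trace else 0)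
      - (if m = 0 ∧ k = 0 then (1 : A) else 0) = gD Rp m k := rfl
  have hOE : ∀ x y : ℤ, OmExt (fun a b => Om b a) x y = OmExt Om y x := by
    intro x y
    unfold OmExt
    by_cases hc : 0 ≤ x ∧ 0 ≤ y
    · rw [if_pos hc, if_pos ⟨hc.2, hc.1⟩]
    · rw [if_neg hc, if_neg (fun hc2 => hc ⟨hc2.2, hc2.1⟩)]
  rw [hL2, gD_symm Rp m k, hOE, hOE, hOE]
  linear_combination h2

/-- Existence and uniqueness of the family `Ω_{+,p;+,q}`, together with its symmetry
and the vanishing `Ω_{+,p;+,0} = Ω_{+,0;+,q} = 0`. -/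
theorem exists_unique_Omega_pp (Rp : M2) (hp : IsResPlus Rp) :
    (∃! Om : ℕ → ℕ → A, GenPP Rp Om) ∧
    (∀ Om : ℕ → ℕ → A, GenPP Rp Om →
      (∀ p q, Om p q = Om q p) ∧ (∀ p, Om p 0 = 0) ∧ (∀ q, Om 0 q = 0)) := by
  constructor
  · refine ⟨fun p q => fOm Rp p q, genPP_fOm Rp hp, ?_⟩
    intro Om' h'
    funext p q
    exact genPP_unique Rp hp Om' h' p q
  · intro Om h
    have hcan : ∀ p q, Om p q = fOm Rp p q := genPP_unique Rp hp Om h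
    refine ⟨?_, ?_, ?_⟩
    · intro p q
      have hswap := genPP_unique Rp hp (fun a b => Om b a) (genPP_swap Rp Om h) p q
      rw [hcan p q, ← hswap]
    · intro p
      rw [hcan p 0]
      exact fOm_zero_right Rp hp (by simp)
    · intro q
      rw [hcan 0 q]
      exact fOm_zero_left (by simp)
end
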